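/- For all positive integers m, n, p, and q, the identity \(\sum_{a=1}^{pm}\sum_{b=1}^{qn}\binom{pm+qm-a+b-1}{b-1}\binom{pn+qn+a-b-1}{a-1}=\frac{pqmn}{(p+q)(m+n)}\binom{pm+pn}{pm}\binom{qm+qn}{qm}\) holds (as an identity of rational numbers). -/

import Mathlib

open Finset

noncomputable def Bc (n k : ℤ) : ℚ :=
  if 0 ≤ k ∧ k ≤ n then ((n.toNat).choose k.toNat : ℚ) else 0

lemma Bc_neg {n k : ℤ} (h : k < 0) : Bc n k = 0 := by
  rw [Bc, if_neg]; rintro ⟨h0, _⟩; omega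

lemma Bc_gt {n k : ℤ} (h : n < k) : Bc n k = 0 := by
  rw [Bc, if_neg]; rintro ⟨_, h1⟩; omega

lemma Bc_natCast (n k : ℕ) : Bc n k = (n.choose k : ℚ) := by
  rw [Bc]
  by_cases h : (k : ℤ) ≤ (n : ℤ)
  · rw [if_pos ⟨Int.natCast_nonneg k, h⟩, Int.toNat_natCast, Int.toNat_natCast]
  · rw [if_neg (by tauto), Nat.choose_eq_zero_of_lt (by omega), Nat.cast_zero]

lemma Bc_zero {n : ℤ} (h : 0 ≤ n) : Bc n 0 = 1 := by
  rw [Bc, if_pos ⟨le_refl 0, h⟩, Int.toNat_zero, Nat.choose_zero_right, Nat.cast_one]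

lemma Bc_pascal {n : ℤ} (hn : 1 ≤ n) (k : ℤ) :
    Bc n k = Bc (n - 1) (k - 1) + Bc (n - 1) k := by
  obtain ⟨n', rfl⟩ : ∃ n' : ℕ, n = (n' : ℤ) + 1 := ⟨(n - 1).toNat, by omega⟩
  rcases lt_or_ge k 0 with hk | hk
  · rw [Bc_neg hk, Bc_neg (by omega), Bc_neg (by omega)]; ring
  obtain ⟨k', rfl⟩ : ∃ k' : ℕ, k = (k' : ℤ) := ⟨k.toNat, by omega⟩
  have e1 : ((n' : ℤ) + 1) - 1 = ((n' : ℕ) : ℤ) := by ring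
  cases k' with
  | zero =>
    rw [e1]
    norm_num
    rw [Bc_zero (by positivity), Bc_neg (by norm_num : (-1:ℤ) < 0),
      Bc_zero (Int.natCast_nonneg n')]
    norm_num
  | succ k'' =>
    have e2 : ((n' : ℤ) + 1) = (((n' + 1 : ℕ) : ℤ)) := by push_cast; ring
    have e3 : (((k'' + 1 : ℕ)) : ℤ) - 1 = ((k'' : ℕ) : ℤ) := by push_cast; ring
    rw [e1, e2, e3, Bc_natCast, Bc_natCast, Bc_natCast, Nat.choose_succ_succ]
    push_cast; ring

lemma Bc_symm {n k : ℤ} (h0 : 0 ≤ k) (h1 : k ≤ n) : Bc n k = Bc n (n - k) := by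
  obtain ⟨n', rfl⟩ : ∃ n' : ℕ, n = (n' : ℤ) := ⟨n.toNat, by omega⟩
  obtain ⟨k', rfl⟩ : ∃ k' : ℕ, k = (k' : ℤ) := ⟨k.toNat, by omega⟩
  have e : ((n' : ℤ) - (k' : ℤ)) = ((n' - k' : ℕ) : ℤ) := by omega
  rw [e, Bc_natCast, Bc_natCast, Nat.choose_symm (by omega)]

-- k * C(n,k) = (n-k+1) * C(n,k-1)
lemma Bc_absorb (n : ℕ) (k : ℤ) :
    (k : ℚ) * Bc n k = ((n : ℚ) - (k : ℚ) + 1) * Bc n (k - 1) := by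
  rcases lt_or_ge k 1 with hk | hk
  · rcases lt_or_ge k 0 with hk0 | hk0
    · rw [Bc_neg hk0, Bc_neg (by omega)]; ring
    · have : k = 0 := by omega
      subst this
      rw [Bc_neg (by norm_num : (0:ℤ) - 1 < 0)]; ring
  obtain ⟨k', rfl⟩ : ∃ k' : ℕ, k = (k' : ℤ) + 1 := ⟨(k - 1).toNat, by omega⟩
  have e1 : ((k' : ℤ) + 1) - 1 = ((k' : ℕ) : ℤ) := by ring
  have e2 : ((k' : ℤ) + 1) = (((k' + 1 : ℕ)) : ℤ) := by push_cast; ring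
  rw [e1, e2, Bc_natCast, Bc_natCast]
  rcases le_or_gt (k' + 1) n with h | h
  · have := Nat.choose_succ_right_eq n k'
    have hcast : (n.choose (k' + 1) : ℚ) * ((k' : ℚ) + 1) = (n.choose k' : ℚ) * ((n : ℚ) - (k' : ℚ)) := by
      have hle : (k' : ℤ) ≤ (n : ℤ) := by exact_mod_cast by omega
      calc (n.choose (k' + 1) : ℚ) * ((k' : ℚ) + 1)
          = ((n.choose (k' + 1) * (k' + 1) : ℕ) : ℚ) := by push_cast; ring
        _ = ((n.choose k' * (n - k') : ℕ) : ℚ) := by rw [this]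
        _ = (n.choose k' : ℚ) * ((n : ℚ) - (k' : ℚ)) := by
            rw [Nat.cast_mul, Nat.cast_sub (by omega)]
    push_cast
    push_cast at hcast
    linarith [hcast]
  · rw [Nat.choose_eq_zero_of_lt h]
    rcases Nat.lt_or_ge n k' with h2 | h2
    · rw [Nat.choose_eq_zero_of_lt h2]; push_cast; ring
    · have : n = k' := by omega
      subst this
      push_cast; ring

-- k * C(n,k) = n * C(n-1, k-1)
lemma Bc_absorb2 (n : ℕ) (k : ℤ) :
    (k : ℚ) * Bc n k = (n : ℚ) * Bc ((n : ℤ) - 1) (k - 1) := by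
  rcases lt_or_ge k 1 with hk | hk
  · rcases lt_or_ge k 0 with hk0 | hk0
    · rw [Bc_neg hk0, Bc_neg (by omega)]; ring
    · have : k = 0 := by omega
      subst this
      rw [Bc_neg (by norm_num : (0:ℤ) - 1 < 0)]; ring
  obtain ⟨k', rfl⟩ : ∃ k' : ℕ, k = (k' : ℤ) + 1 := ⟨(k - 1).toNat, by omega⟩
  cases n with
  | zero =>
    rw [show ((0:ℕ):ℤ) = (0:ℤ) by norm_num, Bc_gt (by omega : (0:ℤ) < (k':ℤ) + 1)]
    push_cast; ring
  | succ n' =>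
    have e1 : ((k' : ℤ) + 1) - 1 = ((k' : ℕ) : ℤ) := by ring
    have e2 : ((k' : ℤ) + 1) = (((k' + 1 : ℕ)) : ℤ) := by push_cast; ring
    have e3 : (((n' + 1 : ℕ)) : ℤ) - 1 = ((n' : ℕ) : ℤ) := by push_cast; ring
    rw [e1, e2, e3, Bc_natCast, Bc_natCast]
    have := Nat.add_one_mul_choose_eq n' k'
    have hcast : ((n' + 1 : ℕ) : ℚ) * (n'.choose k' : ℚ) = ((n' + 1).choose (k' + 1) : ℚ) * ((k' + 1 : ℕ) : ℚ) := by
      exact_mod_cast congrArg (Nat.cast : ℕ → ℚ) this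
    push_cast at hcast ⊢
    linarith [hcast]

lemma Bc_vandermonde (n1 n2 : ℕ) (K : ℤ) (M : ℕ) (h : (n1 : ℤ) < M) :
    ∑ u ∈ Finset.range M, Bc n1 u * Bc n2 (K - u) = Bc (n1 + n2 : ℕ) K := by
  rcases lt_or_ge K 0 with hK | hK
  · rw [Bc_neg hK]
    apply Finset.sum_eq_zero
    intro u _
    rw [Bc_neg (by omega : K - (u : ℤ) < 0)]
    ring
  obtain ⟨Kn, rfl⟩ : ∃ Kn : ℕ, K = (Kn : ℤ) := ⟨K.toNat, by omega⟩
  -- both sums equal sum over range L, L = max M (Kn+1)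
  set L := max M (Kn + 1) with hL
  have step1 : ∑ u ∈ Finset.range M, Bc n1 u * Bc n2 ((Kn : ℤ) - u)
      = ∑ u ∈ Finset.range L, Bc n1 u * Bc n2 ((Kn : ℤ) - u) := by
    apply Finset.sum_subset (Finset.range_subset_range.2 (le_max_left _ _))
    intro u _ hu
    rw [Finset.mem_range, not_lt] at hu
    rw [Bc_gt (by omega : (n1 : ℤ) < (u : ℤ))]
    ring
  have step2 : ∑ u ∈ Finset.range (Kn + 1), Bc n1 u * Bc n2 ((Kn : ℤ) - u)
      = ∑ u ∈ Finset.range L, Bc n1 u * Bc n2 ((Kn : ℤ) - u) := by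
    apply Finset.sum_subset (Finset.range_subset_range.2 (le_max_right _ _))
    intro u _ hu
    rw [Finset.mem_range, not_lt] at hu
    rw [Bc_neg (by omega : (Kn : ℤ) - (u : ℤ) < 0)]
    ring
  rw [step1, ← step2, Bc_natCast]
  have : ∀ u ∈ Finset.range (Kn + 1), Bc n1 u * Bc n2 ((Kn : ℤ) - u)
      = ((n1.choose u * n2.choose (Kn - u) : ℕ) : ℚ) := by
    intro u hu
    rw [Finset.mem_range] at hu
    rw [show ((Kn : ℤ) - u) = ((Kn - u : ℕ) : ℤ) by omega, Bc_natCast, Bc_natCast]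
    push_cast; ring
  rw [Finset.sum_congr rfl this]
  rw [← Nat.cast_sum]
  congr 1
  rw [Nat.add_choose_eq]
  rw [Finset.Nat.sum_antidiagonal_eq_sum_range_succ_mk]

lemma Bc_hockey (s J : ℕ) : ∑ i ∈ Finset.range (J + 1), Bc ((s : ℤ) + i) i
    = Bc ((s : ℤ) + J + 1) J := by
  induction J with
  | zero =>
    rw [Finset.sum_range_one]
    norm_num
    rw [Bc_zero (by positivity), Bc_zero (by positivity)]
  | succ J ih =>
    rw [Finset.sum_range_succ, ih]
    rw [Bc_pascal (by push_cast; omega : (1:ℤ) ≤ (s:ℤ) + ((J+1:ℕ):ℤ) + 1) ((J+1 : ℕ) : ℤ)]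
    have e1 : ((s : ℤ) + ((J+1:ℕ) : ℤ) + 1) - 1 = (s : ℤ) + J + 1 := by push_cast; ring
    have e2 : (((J+1:ℕ)) : ℤ) - 1 = ((J : ℕ) : ℤ) := by push_cast; ring
    rw [e1, e2, show (s : ℤ) + ((J+1 : ℕ) : ℤ) = (s:ℤ) + J + 1 by push_cast; ring]

lemma Bc_diag {n : ℤ} (h : 0 ≤ n) : Bc n n = 1 := by
  rw [Bc, if_pos ⟨h, le_refl n⟩, Nat.choose_self, Nat.cast_one]

lemma VdM2 (r : ℕ) : ∀ J s : ℕ, ∑ i ∈ Finset.range (J + 1),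
    Bc ((r : ℤ) + J - i) ((J : ℤ) - i) * Bc ((s : ℤ) + i) i
    = Bc ((r : ℤ) + s + J + 1) (J : ℤ) := by
  induction r with
  | zero =>
    intro J s
    have h1 : ∀ i ∈ Finset.range (J + 1),
        Bc (((0:ℕ) : ℤ) + J - i) ((J : ℤ) - i) * Bc ((s : ℤ) + i) i = Bc ((s : ℤ) + i) i := by
      intro i hi
      rw [Finset.mem_range] at hi
      rw [show ((0:ℕ) : ℤ) + J - i = (J : ℤ) - i by push_cast; ring,
        Bc_diag (by omega : (0:ℤ) ≤ (J : ℤ) - i), one_mul]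
    rw [Finset.sum_congr rfl h1, Bc_hockey s J,
      show ((0:ℕ) : ℤ) + s + J + 1 = (s : ℤ) + J + 1 by push_cast; ring]
  | succ r ih =>
    intro J
    induction J with
    | zero =>
      intro s
      rw [Finset.sum_range_one]
      norm_num
      rw [Bc_zero (by positivity : (0:ℤ) ≤ (r:ℤ)+1), Bc_zero (by positivity : (0:ℤ) ≤ (s:ℤ)),
        Bc_zero (by positivity : (0:ℤ) ≤ (r:ℤ)+1+s+1)]
      norm_num
    | succ J ihJ =>
      intro s
      have split : ∀ i ∈ Finset.range (J + 1 + 1),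
          Bc (((r+1:ℕ) : ℤ) + (J+1 : ℕ) - i) (((J+1:ℕ) : ℤ) - i) * Bc ((s : ℤ) + i) i
          = Bc ((r : ℤ) + 1 + J - i) ((J : ℤ) - i) * Bc ((s : ℤ) + i) i
            + Bc ((r : ℤ) + (J+1) - i) ((J : ℤ) + 1 - i) * Bc ((s : ℤ) + i) i := by
        intro i hi
        rw [Finset.mem_range] at hi
        have hp := Bc_pascal (by push_cast; omega : (1:ℤ) ≤ ((r+1:ℕ) : ℤ) + ((J+1 : ℕ):ℤ) - i)
          (((J+1:ℕ) : ℤ) - i)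
        rw [hp, show ((r+1:ℕ) : ℤ) + ((J+1:ℕ):ℤ) - i - 1 = (r : ℤ) + 1 + J - i by push_cast; ring,
          show ((J+1:ℕ) : ℤ) - i - 1 = (J : ℤ) - i by push_cast; ring,
          show ((J+1:ℕ) : ℤ) - (i:ℤ) = (J : ℤ) + 1 - i by push_cast; ring,
          show ((r:ℤ) + 1 + J - i) = (r : ℤ) + (J+1) - i by push_cast; ring]
        ring
      rw [Finset.sum_congr rfl split, Finset.sum_add_distrib]
      -- first sum: drop last term (zero), apply ihJ
      have first : ∑ i ∈ Finset.range (J + 1 + 1),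
          Bc ((r : ℤ) + 1 + J - i) ((J : ℤ) - i) * Bc ((s : ℤ) + i) i
          = Bc (((r+1:ℕ)) + (s:ℤ) + J + 1) (J : ℤ) := by
        rw [Finset.sum_range_succ]
        rw [show (J : ℤ) - ((J+1 : ℕ):ℤ) = -1 by push_cast; ring]
        rw [Bc_neg (by norm_num : (-1:ℤ) < 0), zero_mul, add_zero]
        have := ihJ s
        rw [← this]
        apply Finset.sum_congr rfl
        intro i hi
        rw [show ((r+1:ℕ) : ℤ) + (J:ℤ) - i = (r:ℤ) + 1 + J - i by push_cast; ring]
      -- second sum: apply ih (J+1) s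
      have second : ∑ i ∈ Finset.range (J + 1 + 1),
          Bc ((r : ℤ) + (J+1) - i) ((J : ℤ) + 1 - i) * Bc ((s : ℤ) + i) i
          = Bc ((r : ℤ) + s + (J+1) + 1) ((J : ℤ) + 1) := by
        have := ih (J+1) s
        rw [show ((J+1:ℕ) : ℤ) = (J:ℤ) + 1 by push_cast; ring] at this
        rw [← this]
      rw [first, second]
      have hp := Bc_pascal (by push_cast; omega : (1:ℤ) ≤ ((r+1:ℕ) : ℤ) + s + ((J+1:ℕ):ℤ) + 1)
        (((J+1:ℕ) : ℤ))
      rw [hp, show ((r+1:ℕ) : ℤ) + s + ((J+1:ℕ):ℤ) + 1 - 1 = ((r+1:ℕ):ℤ) + (s:ℤ) + J + 1 by push_cast; ring,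
        show ((J+1:ℕ) : ℤ) - 1 = (J : ℤ) by push_cast; ring,
        show ((r+1:ℕ) : ℤ) + (s:ℤ) + J + 1 = (r:ℤ) + s + (J+1) + 1 by push_cast; ring,
        show ((J+1:ℕ) : ℤ) = (J:ℤ) + 1 by push_cast; ring]

noncomputable def Sd (A B C D : ℕ) : ℚ :=
  ∑ i ∈ Finset.range A, ∑ j ∈ Finset.range B,
    Bc ((C : ℤ) + A - 1 - i + j) (j : ℤ) * Bc ((D : ℤ) + B - 1 - j + i) (i : ℤ)

noncomputable def Hd (M A B C D : ℕ) : ℚ :=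
  ∑ t ∈ Finset.Icc 1 M, (t : ℚ) * Bc ((B : ℤ) + C) ((C : ℤ) - t) * Bc ((A : ℤ) + D) ((D : ℤ) - t)

lemma S_rec (A B C D : ℕ) :
    Sd A (B+1) (C+1) D = Sd A (B+1) C D + Sd A B (C+1) D := by
  unfold Sd
  rw [← Finset.sum_add_distrib]
  apply Finset.sum_congr rfl
  intro i hi
  rw [Finset.mem_range] at hi
  have pas : ∀ j ∈ Finset.range (B+1),
      Bc (((C+1:ℕ):ℤ) + A - 1 - i + j) (j:ℤ) * Bc ((D:ℤ) + ((B+1:ℕ):ℤ) - 1 - j + i) (i:ℤ)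
      = Bc ((C:ℤ) + A - 1 - i + j) ((j:ℤ)-1) * Bc ((D:ℤ) + ((B+1:ℕ):ℤ) - 1 - j + i) (i:ℤ)
      + Bc ((C:ℤ) + A - 1 - i + j) (j:ℤ) * Bc ((D:ℤ) + ((B+1:ℕ):ℤ) - 1 - j + i) (i:ℤ) := by
    intro j hj
    have h1 := Bc_pascal (show (1:ℤ) ≤ ((C+1:ℕ):ℤ) + A - 1 - i + j by push_cast; omega) (j:ℤ)
    rw [h1, show ((C+1:ℕ):ℤ) + A - 1 - i + j - 1 = (C:ℤ) + A - 1 - i + j by push_cast; ring]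
    ring
  rw [Finset.sum_congr rfl pas, Finset.sum_add_distrib]
  have part1 : ∑ j ∈ Finset.range (B+1),
      Bc ((C:ℤ) + A - 1 - i + j) ((j:ℤ)-1) * Bc ((D:ℤ) + ((B+1:ℕ):ℤ) - 1 - j + i) (i:ℤ)
      = ∑ j ∈ Finset.range B,
      Bc (((C+1:ℕ):ℤ) + A - 1 - i + j) (j:ℤ) * Bc ((D:ℤ) + (B:ℤ) - 1 - j + i) (i:ℤ) := by
    rw [Finset.sum_range_succ']
    rw [show ((0:ℕ):ℤ) - 1 = (-1:ℤ) by norm_num]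
    rw [Bc_neg (by norm_num : (-1:ℤ) < 0), zero_mul, add_zero]
    apply Finset.sum_congr rfl
    intro j hj
    rw [show (((j+1:ℕ)):ℤ) - 1 = (j:ℤ) by push_cast; ring,
      show ((C:ℤ) + A - 1 - i + ((j+1:ℕ):ℤ)) = ((C+1:ℕ):ℤ) + A - 1 - i + j by push_cast; ring,
      show ((D:ℤ) + ((B+1:ℕ):ℤ) - 1 - ((j+1:ℕ):ℤ) + i) = (D:ℤ) + B - 1 - j + i by push_cast; ring]
  rw [part1]
  ring

lemma H_rec (M A B C D : ℕ) :
    Hd M A (B+1) (C+1) D = Hd M A (B+1) C D + Hd M A B (C+1) D := by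
  unfold Hd
  rw [← Finset.sum_add_distrib]
  apply Finset.sum_congr rfl
  intro t ht
  have h1 := Bc_pascal (show (1:ℤ) ≤ ((B+1:ℕ):ℤ) + ((C+1:ℕ):ℤ) by push_cast; omega) (((C+1:ℕ):ℤ) - t)
  rw [h1, show ((B+1:ℕ):ℤ) + ((C+1:ℕ):ℤ) - 1 = ((B+1:ℕ):ℤ) + (C:ℤ) by push_cast; ring,
    show ((C+1:ℕ):ℤ) - (t:ℤ) - 1 = (C:ℤ) - t by push_cast; ring,
    show ((B+1:ℕ):ℤ) + (C:ℤ) = (B:ℤ) + ((C+1:ℕ):ℤ) by push_cast; ring]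
  ring

lemma t_mul (C : ℕ) (hC : 1 ≤ C) (t : ℤ) :
    (t:ℚ) * Bc (C:ℤ) ((C:ℤ)-t) = (C:ℚ) * Bc ((C:ℤ)-1) ((C:ℤ)-t) := by
  have h1 := Bc_absorb2 C ((C:ℤ)-t)
  have h2 := Bc_pascal (show (1:ℤ) ≤ (C:ℤ) by exact_mod_cast hC) ((C:ℤ)-t)
  push_cast at h1
  linear_combination (C:ℚ) * h2 - h1

lemma Bc_flip (C : ℕ) (t : ℤ) (ht : 1 ≤ t) :
    Bc ((C:ℤ)-1) ((C:ℤ)-t) = Bc ((C:ℤ)-1) (t-1) := by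
  rcases le_or_gt t C with h | h
  · have := Bc_symm (show (0:ℤ) ≤ t - 1 by omega) (show t - 1 ≤ (C:ℤ) - 1 by omega)
    rw [this, show (C:ℤ) - 1 - (t-1) = (C:ℤ) - t by ring]
  · rw [Bc_neg (by omega : (C:ℤ) - t < 0), Bc_gt (by omega : (C:ℤ) - 1 < t - 1)]

lemma key_baseB (A C' D M : ℕ) (hCM : C' + 1 ≤ M) :
    Hd M A 0 (C'+1) D = ((C'+1 : ℕ):ℚ) * Bc ((A:ℤ)+(C'+1:ℕ)+D-1) ((D:ℤ)-1) := by
  set C := C' + 1 with hC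
  unfold Hd
  have step : ∀ t ∈ Finset.Icc 1 M,
      (t : ℚ) * Bc (((0:ℕ):ℤ) + C) ((C:ℤ) - t) * Bc ((A:ℤ) + D) ((D:ℤ) - t)
      = (C:ℚ) * (Bc ((C':ℕ):ℤ) ((t:ℤ)-1) * Bc ((A:ℤ) + D) ((D:ℤ) - t)) := by
    intro t ht
    rw [Finset.mem_Icc] at ht
    rw [show ((0:ℕ):ℤ) + C = (C:ℤ) by push_cast; ring]
    rw [mul_assoc, ← mul_assoc ((t:ℕ):ℚ)]
    rw [show ((t:ℕ):ℚ) * Bc (C:ℤ) ((C:ℤ) - t) = ((t:ℤ):ℚ) * Bc (C:ℤ) ((C:ℤ) - t) by push_cast; ring]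
    rw [t_mul C (by omega) (t:ℤ), Bc_flip C (t:ℤ) (by exact_mod_cast ht.1)]
    rw [show ((C:ℤ) - 1) = ((C':ℕ):ℤ) by rw [hC]; push_cast; ring]
    ring
  rw [Finset.sum_congr rfl step, ← Finset.mul_sum]
  congr 1
  rw [show Finset.Icc 1 M = Finset.Ico 1 (M+1) by rw [Finset.Ico_add_one_right_eq_Icc], Finset.sum_Ico_eq_sum_range]
  have e : M + 1 - 1 = M := by omega
  rw [e]
  have step2 : ∀ u ∈ Finset.range M,
      Bc ((C':ℕ):ℤ) (((1+u:ℕ):ℤ)-1) * Bc ((A:ℤ) + D) ((D:ℤ) - ((1+u:ℕ):ℤ))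
      = Bc ((C':ℕ):ℤ) ((u:ℕ):ℤ) * Bc (((A+D:ℕ)):ℤ) (((D:ℤ)-1) - (u:ℕ)) := by
    intro u hu
    rw [show (((1+u:ℕ)):ℤ) - 1 = ((u:ℕ):ℤ) by push_cast; ring,
      show ((D:ℤ) - ((1+u:ℕ):ℤ)) = ((D:ℤ)-1) - (u:ℕ) by push_cast; ring,
      show ((A:ℤ) + D) = (((A+D:ℕ)):ℤ) by push_cast; ring]
  rw [Finset.sum_congr rfl step2, Bc_vandermonde C' (A+D) ((D:ℤ)-1) M (by push_cast; omega)]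
  congr 1
  rw [hC]; push_cast; ring

lemma key_baseC (A B D : ℕ) :
    Sd A B 0 D = (B:ℚ) * Bc ((A:ℤ)+B+D-1) ((A:ℤ)-1) := by
  cases A with
  | zero =>
    rw [show ((0:ℕ):ℤ) - 1 = (-1:ℤ) by norm_num, Bc_neg (by norm_num : (-1:ℤ) < 0)]
    simp [Sd]
  | succ A' =>
    set A := A' + 1 with hA
    unfold Sd
    rw [Finset.sum_comm]
    have step : ∀ j ∈ Finset.range B,
        (∑ i ∈ Finset.range A,
          Bc (((0:ℕ):ℤ) + A - 1 - i + j) (j:ℤ) * Bc ((D:ℤ) + B - 1 - j + i) (i:ℤ))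
        = Bc ((A:ℤ)+B+D-1) ((A:ℤ)-1) := by
      intro j hj
      rw [Finset.mem_range] at hj
      have conv : ∀ i ∈ Finset.range A,
          Bc (((0:ℕ):ℤ) + A - 1 - i + j) (j:ℤ) * Bc ((D:ℤ) + B - 1 - j + i) (i:ℤ)
          = Bc ((j:ℤ) + (A':ℕ) - i) (((A':ℕ):ℤ) - i) * Bc (((D + (B-1-j) : ℕ):ℤ) + i) (i:ℤ) := by
        intro i hi
        rw [Finset.mem_range] at hi
        have etop : ((0:ℕ):ℤ) + A - 1 - i + j = (j:ℤ) + (A':ℕ) - i := by rw [hA]; push_cast; ring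
        have hsym := Bc_symm (show (0:ℤ) ≤ (j:ℤ) by positivity)
          (show (j:ℤ) ≤ (j:ℤ) + (A':ℕ) - i by push_cast; omega)
        rw [etop, hsym, show (j:ℤ) + (A':ℕ) - i - j = ((A':ℕ):ℤ) - i by ring,
          show ((D:ℤ) + B - 1 - j + i) = (((D + (B-1-j) : ℕ)):ℤ) + i by push_cast; omega]
      rw [Finset.sum_congr rfl conv, VdM2 j A' (D + (B-1-j))]
      congr 1 <;> (push_cast; omega)
    rw [Finset.sum_congr rfl step, Finset.sum_const, Finset.card_range, nsmul_eq_mul]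

lemma key : ∀ (k B C : ℕ), B + C = k → ∀ (A D M : ℕ), C ≤ M →
    Sd A B C D + (C : ℚ) * Bc ((A:ℤ)+B+C+D-1) ((B:ℤ)+D-1)
    = Hd M A B C D + (B : ℚ) * Bc ((A:ℤ)+B+C+D-1) ((A:ℤ)+C-1) := by
  intro k
  induction k using Nat.strong_induction_on with
  | _ k ih =>
    intro B C hk A D M hCM
    rcases C with _ | C'
    · -- C = 0
      have hH : Hd M A B 0 D = 0 := by
        apply Finset.sum_eq_zero
        intro t ht
        rw [Finset.mem_Icc] at ht
        rw [show ((0:ℕ):ℤ) - (t:ℤ) = -(t:ℤ) by push_cast; ring,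
          Bc_neg (by omega : -(t:ℤ) < 0)]
        ring
      rw [hH, key_baseC A B D]
      simp only [Nat.cast_zero, add_zero, zero_mul, zero_add, Nat.cast_ofNat]
    · rcases B with _ | B'
      · -- B = 0
        have hS : Sd A 0 (C'+1) D = 0 := by simp [Sd]
        rw [hS, key_baseB A C' D M hCM]
        simp only [Nat.cast_zero, add_zero, zero_mul, zero_add]
      · -- step
        have h1 := S_rec A B' C' D
        have h2 := H_rec M A B' C' D
        have ih1 := ih ((B'+1) + C') (by omega) (B'+1) C' rfl A D M (by omega)
        have ih2 := ih (B' + (C'+1)) (by omega) B' (C'+1) rfl A D M hCM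
        have hp1 := Bc_pascal
          (show (1:ℤ) ≤ (A:ℤ)+((B'+1:ℕ):ℤ)+((C'+1:ℕ):ℤ)+D-1 by push_cast; omega)
          (((B'+1:ℕ):ℤ)+D-1)
        have hp2 := Bc_pascal
          (show (1:ℤ) ≤ (A:ℤ)+((B'+1:ℕ):ℤ)+((C'+1:ℕ):ℤ)+D-1 by push_cast; omega)
          ((A:ℤ)+((C'+1:ℕ):ℤ)-1)
        have hsym : Bc ((A:ℤ)+B'+C'+D) ((B':ℤ)+D) = Bc ((A:ℤ)+B'+C'+D) ((A:ℤ)+C') := by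
          rw [Bc_symm (by positivity : (0:ℤ) ≤ (B':ℤ)+D) (by push_cast; omega)]
          congr 1
          ring
        push_cast at h1 h2 ih1 ih2 hp1 hp2 hsym ⊢
        ring_nf at h1 h2 ih1 ih2 hp1 hp2 hsym ⊢
        linear_combination h1 + ih1 + ih2 + ((C':ℚ)+1)*hp1 - ((B':ℚ)+1)*hp2 + hsym - h2

theorem guo_zeng_corollary1_exchanged (m n p q : ℕ) (hm : 0 < m) (hn : 0 < n)
    (hp : 0 < p) (hq : 0 < q) :
    ∑ a ∈ Finset.Icc 1 (p * m), ∑ b ∈ Finset.Icc 1 (q * n),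
      ((Nat.choose (p * m + q * m - a + b - 1) (b - 1) : ℚ) *
        (Nat.choose (p * n + q * n + a - b - 1) (a - 1) : ℚ)) =
    (p * q * m * n : ℚ) / ((p + q) * (m + n)) *
      (Nat.choose (p * m + p * n) (p * m) : ℚ) *
      (Nat.choose (q * m + q * n) (q * m) : ℚ) := by
  set A := p * m with hA
  set B := q * n with hB
  set C := q * m with hC
  set D := p * n with hD
  have hA1 : 1 ≤ A := Nat.one_le_iff_ne_zero.2 (by positivity)
  have hB1 : 1 ≤ B := Nat.one_le_iff_ne_zero.2 (by positivity)
  have hC1 : 1 ≤ C := Nat.one_le_iff_ne_zero.2 (by positivity)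
  have hD1 : 1 ≤ D := Nat.one_le_iff_ne_zero.2 (by positivity)
  -- check what the goal looks like after `set`
  show ∑ a ∈ Finset.Icc 1 A, ∑ b ∈ Finset.Icc 1 B,
      ((Nat.choose (A + C - a + b - 1) (b - 1) : ℚ) *
        (Nat.choose (D + B + a - b - 1) (a - 1) : ℚ)) =
    (p * q * m * n : ℚ) / ((p + q) * (m + n)) *
      (Nat.choose (A + D) A : ℚ) * (Nat.choose (C + B) C : ℚ)
  -- Step 1 : LHS = Sd A B C D
  have conv : (∑ a ∈ Finset.Icc 1 A, ∑ b ∈ Finset.Icc 1 B,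
      ((Nat.choose (A + C - a + b - 1) (b - 1) : ℚ) *
        (Nat.choose (D + B + a - b - 1) (a - 1) : ℚ)))
      = Sd A B C D := by
    unfold Sd
    rw [show Finset.Icc 1 A = Finset.Ico 1 (A+1) by rw [Finset.Ico_add_one_right_eq_Icc],
      Finset.sum_Ico_eq_sum_range]
    have eA : A + 1 - 1 = A := by omega
    rw [eA]
    apply Finset.sum_congr rfl
    intro i hi
    rw [Finset.mem_range] at hi
    rw [show Finset.Icc 1 B = Finset.Ico 1 (B+1) by rw [Finset.Ico_add_one_right_eq_Icc],
      Finset.sum_Ico_eq_sum_range]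
    have eB : B + 1 - 1 = B := by omega
    rw [eB]
    apply Finset.sum_congr rfl
    intro j hj
    rw [Finset.mem_range] at hj
    rw [show ((C:ℤ) + A - 1 - i + j) = ((A + C - (1+i) + (1+j) - 1 : ℕ) : ℤ) by omega,
      show ((D:ℤ) + B - 1 - j + i) = ((D + B + (1+i) - (1+j) - 1 : ℕ) : ℤ) by omega,
      show ((j:ℤ)) = (((1+j) - 1 : ℕ) : ℤ) by omega,
      show ((i:ℤ)) = (((1+i) - 1 : ℕ) : ℤ) by omega,
      Bc_natCast, Bc_natCast]
  -- Step 2 : key lemma with M = C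
  have hkey := key (B + C) B C rfl A D C (le_refl C)
  -- Step 3 : the two boundary terms are equal
  have hbd : (B:ℚ) * Bc ((A:ℤ)+B+C+D-1) ((A:ℤ)+C-1)
      = (C:ℚ) * Bc ((A:ℤ)+B+C+D-1) ((B:ℤ)+D-1) := by
    have h1 := Bc_absorb2 (A+B+C+D) ((A+C : ℕ):ℤ)
    have h2 := Bc_absorb2 (A+B+C+D) ((B+D : ℕ):ℤ)
    have hs : Bc ((A+B+C+D:ℕ):ℤ) ((A+C:ℕ):ℤ) = Bc ((A+B+C+D:ℕ):ℤ) ((B+D:ℕ):ℤ) := by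
      rw [Bc_symm (by positivity : (0:ℤ) ≤ ((A+C:ℕ):ℤ)) (by push_cast; omega)]
      congr 1
      push_cast; ring
    have hNpos : (0:ℚ) < ((A+B+C+D:ℕ):ℚ) := by positivity
    apply mul_left_cancel₀ (ne_of_gt hNpos)
    have e1 : ((A:ℤ)+B+C+D-1) = ((A+B+C+D:ℕ):ℤ) - 1 := by push_cast; ring
    have e2 : ((A:ℤ)+C-1) = ((A+C:ℕ):ℤ) - 1 := by push_cast; ring
    have e3 : ((B:ℤ)+D-1) = ((B+D:ℕ):ℤ) - 1 := by push_cast; ring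
    rw [e1, e2, e3]
    have hXY : (B:ℚ) * ((A+C:ℕ):ℚ) = (C:ℚ) * ((B+D:ℕ):ℚ) := by
      rw [hA, hB, hC, hD]; push_cast; ring
    push_cast at h1 h2 hXY hs ⊢
    linear_combination (-(B:ℚ)) * h1 + (C:ℚ) * h2 + ((B:ℚ) * ((A:ℚ)+(C:ℚ))) * hs
      + Bc ((A:ℤ)+B+C+D) ((B:ℤ)+D) * hXY
  -- Step 4 : telescoping closed form for Hd C A B C D
  set Gf : ℕ → ℚ := fun t =>
    ((t:ℚ)+A) * ((t:ℚ)+B) * Bc ((B:ℤ)+C) ((C:ℤ)-t) * Bc ((A:ℤ)+D) ((D:ℤ)-t) with hGf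
  have tele : ∀ t ∈ Finset.Icc 1 C,
      ((A+B+C+D : ℕ):ℚ) * ((t:ℚ) * Bc ((B:ℤ)+C) ((C:ℤ)-t) * Bc ((A:ℤ)+D) ((D:ℤ)-t))
      = Gf t - Gf (t+1) := by
    intro t ht
    have ha := Bc_absorb (B+C) ((C:ℤ)-t)
    have hb := Bc_absorb (A+D) ((D:ℤ)-t)
    have hab := congrArg₂ (fun x y : ℚ => x * y) ha hb
    have hpqmn : (A:ℚ) * B = (C:ℚ) * D := by rw [hA, hB, hC, hD]; push_cast; ring
    simp only [hGf]
    push_cast at hab ⊢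
    rw [show (C:ℤ)-((t:ℤ)+1) = (C:ℤ)-t-1 from by ring,
      show (D:ℤ)-((t:ℤ)+1) = (D:ℤ)-t-1 from by ring]
    linear_combination (-1:ℚ) * hab
      - (Bc ((B:ℤ)+C) ((C:ℤ)-t) * Bc ((A:ℤ)+D) ((D:ℤ)-t)) * hpqmn
  have step4 : ((A+B+C+D : ℕ):ℚ) * Hd C A B C D
      = ((1:ℚ)+A) * ((1:ℚ)+B) * Bc ((B:ℤ)+C) ((C:ℤ)-1) * Bc ((A:ℤ)+D) ((D:ℤ)-1) := by
    unfold Hd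
    rw [Finset.mul_sum, Finset.sum_congr rfl tele]
    rw [show Finset.Icc 1 C = Finset.Ico 1 (C+1) by rw [Finset.Ico_add_one_right_eq_Icc],
      Finset.sum_Ico_eq_sum_range]
    have eC : C + 1 - 1 = C := by omega
    rw [eC]
    have treshape : (∑ u ∈ Finset.range C, (Gf (1+u) - Gf (1+u+1)))
        = (fun v => Gf (1+v)) 0 - (fun v => Gf (1+v)) C :=
      Finset.sum_range_sub' (fun v => Gf (1+v)) C
    rw [treshape]
    simp only []
    have hzero : Gf (1+C) = 0 := by
      simp only [hGf]
      rw [show ((C:ℤ) - ((1+C:ℕ):ℤ)) = (-1:ℤ) by push_cast; ring,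
        Bc_neg (by norm_num : (-1:ℤ) < 0)]
      ring
    rw [hzero, sub_zero]
    simp only [hGf]
    norm_num
  -- Step 5 : simplify the product at t = 1
  have hv1 : Bc ((A:ℤ)+D) ((D:ℤ)-1) = Bc ((A:ℤ)+D) ((A:ℤ)+1) := by
    rw [Bc_symm (show (0:ℤ) ≤ (D:ℤ)-1 by exact_mod_cast by omega)
      (show (D:ℤ)-1 ≤ (A:ℤ)+D by push_cast; omega)]
    congr 1
    ring
  have hv2 : Bc ((B:ℤ)+C) ((C:ℤ)-1) = Bc ((B:ℤ)+C) ((B:ℤ)+1) := by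
    rw [Bc_symm (show (0:ℤ) ≤ (C:ℤ)-1 by exact_mod_cast by omega)
      (show (C:ℤ)-1 ≤ (B:ℤ)+C by push_cast; omega)]
    congr 1
    ring
  have ha1 : ((A:ℚ)+1) * Bc ((A:ℤ)+D) ((A:ℤ)+1) = (D:ℚ) * Bc ((A:ℤ)+D) (A:ℤ) := by
    have h := Bc_absorb (A+D) ((A:ℤ)+1)
    rw [show ((A:ℤ)+1-1) = (A:ℤ) by ring] at h
    push_cast at h ⊢
    linear_combination h
  have hb1 : ((B:ℚ)+1) * Bc ((B:ℤ)+C) ((B:ℤ)+1) = (C:ℚ) * Bc ((B:ℤ)+C) (B:ℤ) := by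
    have h := Bc_absorb (B+C) ((B:ℤ)+1)
    rw [show ((B:ℤ)+1-1) = (B:ℤ) by ring] at h
    push_cast at h ⊢
    linear_combination h
  have hsymB : Bc ((B:ℤ)+C) (B:ℤ) = Bc ((B:ℤ)+C) (C:ℤ) := by
    rw [Bc_symm (by positivity : (0:ℤ) ≤ (B:ℤ)) (by push_cast; omega)]
    congr 1
    ring
  have hch1 : Bc ((A:ℤ)+D) (A:ℤ) = (Nat.choose (A + D) A : ℚ) := by
    rw [show ((A:ℤ)+D) = ((A + D : ℕ):ℤ) by push_cast; ring, Bc_natCast]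
  have hch2 : Bc ((B:ℤ)+C) (C:ℤ) = (Nat.choose (C + B) C : ℚ) := by
    rw [show ((B:ℤ)+C) = ((C + B : ℕ):ℤ) by push_cast; ring, Bc_natCast]
  -- chain : closed form of Hd
  have chain : ((A+B+C+D : ℕ):ℚ) * Hd C A B C D
      = (C:ℚ) * (D:ℚ) * (Nat.choose (A + D) A : ℚ) * (Nat.choose (C + B) C : ℚ) := by
    rw [step4, hv1, hv2, ← hch1, ← hch2, ← hsymB]
    linear_combination (((B:ℚ)+1) * Bc ((B:ℤ)+C) ((B:ℤ)+1)) * ha1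
      + ((D:ℚ) * Bc ((A:ℤ)+D) (A:ℤ)) * hb1
  -- finish
  have hSdHd : Sd A B C D = Hd C A B C D := by
    rw [hbd] at hkey
    linarith [hkey]
  rw [conv, hSdHd]
  have hNN : ((A+B+C+D:ℕ):ℚ) = ((p:ℚ)+q) * ((m:ℚ)+n) := by
    rw [hA, hB, hC, hD]; push_cast; ring
  have hCD2 : (C:ℚ) * (D:ℚ) = (p:ℚ)*q*m*n := by
    rw [hC, hD]; push_cast; ring
  rw [hNN, hCD2] at chain
  have hne : ((p:ℚ)+q) * ((m:ℚ)+n) ≠ 0 := by positivity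
  rw [div_mul_eq_mul_div, div_mul_eq_mul_div, eq_div_iff hne]
  push_cast at chain ⊢
  linear_combination chain
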